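/- Let G ≤ GL(V) be a group of linear maps on a vector space V over a field F, let Z ≤ F^× act by scalars, and let v ∈ V with v ≠ 0. If the only scalars c ∈ F^× for which c·v lies in the G-orbit of v are c = ±1, and -id ∈ G, and the G-orbit of v is regular, then the (Z∘G)-orbit of v is regular for every subgroup Z ≤ F^×. -/
import Mathlib
open scoped Pointwise

theorem regular_orbit_of_central_product (F : Type*) [Field F] (V : Type*)
    [AddCommGroup V] [Module F V]
    (G : Subgroup (LinearMap.GeneralLinearGroup F V)) (Z : Subgroup Fˣ)
    (v : V) (hv : v ≠ 0)
    (hscalars : ∀ c : Fˣ, (c : F) • v ∈ MulAction.orbit G v → c = 1 ∨ c = -1)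
    (hneg : (-1 : LinearMap.GeneralLinearGroup F V) ∈ G)
    (hreg : MulAction.stabilizer G v = ⊥) :
    MulAction.stabilizer ↥
      (G ⊔ (Z.map (Units.map (algebraMap F (Module.End F V) : F →* Module.End F V)) :
        Subgroup (LinearMap.GeneralLinearGroup F V))) v = ⊥ := by
  set φ : Fˣ →* LinearMap.GeneralLinearGroup F V :=
    Units.map (algebraMap F (Module.End F V) : F →* Module.End F V) with hφ
  have hsmul : ∀ (c : Fˣ) (w : V), (φ c) • w = (c : F) • w := by
    intro c w
    show ((algebraMap F (Module.End F V)) (c : F)) w = (c : F) • w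
    simp [Module.algebraMap_end_apply]
  have hcomm : ∀ x ∈ Z.map φ, ∀ g : LinearMap.GeneralLinearGroup F V, g * x = x * g := by
    rintro x ⟨c, _, rfl⟩ g
    ext w
    show (g * φ c) • w = (φ c * g) • w
    rw [mul_smul, mul_smul, hsmul, hsmul]
    exact map_smul (g : Module.End F V) (c : F) w
  haveI : (Z.map φ).Normal := ⟨fun n hn g => by
    rw [hcomm n hn g, mul_inv_cancel_right]; exact hn⟩
  have hφneg : φ (-1) = -1 := by
    refine Units.ext ?_
    show (algebraMap F (Module.End F V)) ((-1 : Fˣ) : F) = _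
    simp
  rw [Subgroup.eq_bot_iff_forall]
  rintro ⟨x, hxmem⟩ hx
  have hx' : x • v = v := hx
  have hmem' : x ∈ (G : Set (LinearMap.GeneralLinearGroup F V)) * ((Z.map φ) : Set (LinearMap.GeneralLinearGroup F V)) := by
    rw [← Subgroup.mul_normal]; exact hxmem
  obtain ⟨g, hg, z, hz, rfl⟩ := hmem'
  obtain ⟨c, hc, rfl⟩ := hz
  -- compute g • v = (c:F)⁻¹ • v
  have hgv : g • v = ((c : F))⁻¹ • v := by
    rw [mul_smul, hsmul] at hx'
    have : (c : F) • (g • v) = v :=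
      ((map_smul (g : Module.End F V) (c : F) v).symm).trans hx'
    rw [eq_inv_smul_iff₀ (Units.ne_zero c)]
    exact this
  have horb : ((c⁻¹ : Fˣ) : F) • v ∈ MulAction.orbit G v := by
    refine ⟨⟨g, hg⟩, ?_⟩
    show g • v = _
    rw [hgv]
    norm_num
  have hc1 : c = 1 ∨ c = -1 := by
    rcases hscalars c⁻¹ horb with h | h
    · left; simpa using inv_eq_one.mp h
    · right
      have := congrArg (·⁻¹) h
      simpa using this
  have hzG : φ c ∈ G := by
    rcases hc1 with rfl | rfl
    · rw [map_one]; exact one_mem G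
    · rw [hφneg]; exact hneg
  have hxG : g * φ c ∈ G := mul_mem hg hzG
  have : (⟨g * φ c, hxG⟩ : ↥G) ∈ MulAction.stabilizer G v := hx'
  rw [hreg, Subgroup.mem_bot] at this
  have hx1 : g * φ c = 1 := congrArg Subtype.val this
  exact Subtype.ext hx1
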